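/- Assume G is connected with at least one edge and P χ_(a,b) ≠ 0 for every ordered pair (a,b) of adjacent vertices. Let h = dim H and let n be twice the number of edges of G. If the normalized vectors x_(a,b) = P χ_(a,b)/‖P χ_(a,b)‖ satisfy the second-moment condition of a spherical 2-design, namely ∑_{(a,b)} ⟨x_(a,b), w⟩² = (n/h)‖w‖² for every w ∈ H (the sum over all ordered pairs of adjacent vertices), then all the norms ‖P χ_(a,b)‖ are equal. -/

import Mathlib

open scoped BigOperators RealInnerProductSpace
set_option linter.unusedSectionVars false
set_option linter.unusedVariables false
set_option maxHeartbeats 1000000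

noncomputable section

variable {V : Type*} [Fintype V] [DecidableEq V]

/-- The indicator chain `χ_(a,b)`: 1 at `(a,b)`, −1 at `(b,a)`, 0 elsewhere. -/
def edgeChi (a b : V) : EuclideanSpace ℝ (V × V) :=
  WithLp.toLp 2 (fun p => if p = (a, b) then 1 else if p = (b, a) then -1 else 0)

/-- The cycle space `H` of a simple graph `G`: the kernel of the boundary map
restricted to the edge space `C₁`. -/
def cycleSpace (G : SimpleGraph V) : Submodule ℝ (EuclideanSpace ℝ (V × V)) where
  carrier := { f | (∀ u v : V, f (u, v) = - f (v, u)) ∧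
               (∀ u v : V, ¬ G.Adj u v → f (u, v) = 0) ∧
               (∀ v : V, ∑ u : V, f (u, v) = 0) }
  add_mem' := by
    rintro f g ⟨hf1, hf2, hf3⟩ ⟨hg1, hg2, hg3⟩
    refine ⟨fun u v => ?_, fun u v h => ?_, fun v => ?_⟩
    · show f (u, v) + g (u, v) = -(f (v, u) + g (v, u))
      rw [hf1 u v, hg1 u v]; ring
    · show f (u, v) + g (u, v) = 0
      rw [hf2 u v h, hg2 u v h]; ring
    · show ∑ u : V, (f (u, v) + g (u, v)) = 0
      rw [Finset.sum_add_distrib, hf3 v, hg3 v]; ring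
  zero_mem' := by
    refine ⟨fun u v => ?_, fun u v h => ?_, fun v => ?_⟩ <;> simp
  smul_mem' := by
    rintro c f ⟨hf1, hf2, hf3⟩
    refine ⟨fun u v => ?_, fun u v h => ?_, fun v => ?_⟩
    · show c * f (u, v) = -(c * f (v, u))
      rw [hf1 u v]; ring
    · show c * f (u, v) = 0
      rw [hf2 u v h]; ring
    · show ∑ u : V, c * f (u, v) = 0
      rw [← Finset.mul_sum, hf3 v]; ring

/-- The projected edge vector `P χ_(a,b)`, where `P` is the orthogonal projection
onto the cycle space of `G`. -/
def projEdge (G : SimpleGraph V) (a b : V) : EuclideanSpace ℝ (V × V) :=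
  (Submodule.orthogonalProjection (cycleSpace G) (edgeChi a b) : EuclideanSpace ℝ (V × V))


variable {G : SimpleGraph V}

lemma mem_cycleSpace_iff {f : EuclideanSpace ℝ (V × V)} :
    f ∈ cycleSpace G ↔ ((∀ u v : V, f (u, v) = - f (v, u)) ∧
      (∀ u v : V, ¬ G.Adj u v → f (u, v) = 0) ∧
      (∀ v : V, ∑ u : V, f (u, v) = 0)) := Iff.rfl

lemma edgeChi_eq_single {a b : V} (hab : a ≠ b) :
    edgeChi a b = EuclideanSpace.single (a, b) (1:ℝ) - EuclideanSpace.single (b, a) (1:ℝ) := by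
  ext p
  simp only [edgeChi, EuclideanSpace.single_apply, PiLp.toLp_apply, PiLp.sub_apply]
  rcases eq_or_ne p (a, b) with h | h
  · subst h
    simp [Prod.ext_iff, hab]
  · rcases eq_or_ne p (b, a) with h2 | h2
    · subst h2
      simp [Prod.ext_iff, hab.symm, h]
    · simp [h, h2]

lemma inner_edgeChi_left {a b : V} (hab : a ≠ b) (w : EuclideanSpace ℝ (V × V)) :
    ⟪edgeChi a b, w⟫ = w (a, b) - w (b, a) := by
  rw [edgeChi_eq_single hab, inner_sub_left, EuclideanSpace.inner_single_left,
    EuclideanSpace.inner_single_left]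
  simp

lemma inner_edgeChi_of_mem {a b : V} (hab : G.Adj a b) {w : EuclideanSpace ℝ (V × V)}
    (hw : w ∈ cycleSpace G) : ⟪edgeChi a b, w⟫ = 2 * w (a, b) := by
  rw [inner_edgeChi_left hab.ne w, (mem_cycleSpace_iff.1 hw).1 b a]
  ring

lemma projEdge_mem (G : SimpleGraph V) (a b : V) : projEdge G a b ∈ cycleSpace G :=
  (Submodule.orthogonalProjection (cycleSpace G) (edgeChi a b)).2

lemma inner_projEdge_of_mem {a b : V} (hab : G.Adj a b) {w : EuclideanSpace ℝ (V × V)}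
    (hw : w ∈ cycleSpace G) : ⟪projEdge G a b, w⟫ = 2 * w (a, b) := by
  rw [← inner_edgeChi_of_mem hab hw]
  have horth : edgeChi a b - projEdge G a b ∈ (cycleSpace G)ᗮ :=
    Submodule.sub_starProjection_mem_orthogonal (K := cycleSpace G) (edgeChi a b)
  have h0 : ⟪edgeChi a b - projEdge G a b, w⟫ = 0 :=
    (Submodule.mem_orthogonal' (cycleSpace G) _).1 horth w hw
  rw [inner_sub_left] at h0
  linarith

lemma norm_sq_projEdge {a b : V} (hab : G.Adj a b) :
    ‖projEdge G a b‖ ^ 2 = 2 * (projEdge G a b) (a, b) := by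
  rw [← real_inner_self_eq_norm_sq]
  rw [← inner_projEdge_of_mem hab (projEdge_mem G a b)]

lemma edgeChi_swap {a b : V} (hab : a ≠ b) (u v : V) :
    edgeChi a b (u, v) = - edgeChi a b (v, u) := by
  · simp only [edgeChi, PiLp.toLp_apply, Prod.ext_iff]
    by_cases h1 : u = a <;> by_cases h2 : v = b <;> by_cases h3 : u = b <;> by_cases h4 : v = a <;>
      simp_all

lemma edgeChi_ne_zero {a b u v : V} (h : edgeChi a b (u, v) ≠ 0) :
    (u, v) = (a, b) ∨ (u, v) = (b, a) := by
  by_contra hc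
  push_neg at hc
  simp [edgeChi, PiLp.toLp_apply, hc.1, hc.2] at h

lemma edgeChi_boundary {a b : V} (hab : a ≠ b) (v : V) :
    ∑ u : V, edgeChi a b (u, v) = (if v = b then 1 else 0) - (if v = a then 1 else 0) := by
  have : ∀ u : V, edgeChi a b (u, v) =
      (if v = b then (if u = a then (1:ℝ) else 0) else 0)
      - (if v = a then (if u = b then (1:ℝ) else 0) else 0) := by
    intro u
    simp only [edgeChi, PiLp.toLp_apply, Prod.ext_iff]
    by_cases h1 : u = a <;> by_cases h2 : v = b <;> by_cases h3 : u = b <;> by_cases h4 : v = a <;>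
      simp_all
  rw [Finset.sum_congr rfl (fun u _ => this u), Finset.sum_sub_distrib]
  congr 1
  · by_cases h : v = b <;> simp [h]
  · by_cases h : v = a <;> simp [h]

variable {H : SimpleGraph V}

def walkFlow : ∀ {x y : V}, H.Walk x y → EuclideanSpace ℝ (V × V)
  | _, _, SimpleGraph.Walk.nil => 0
  | _, _, @SimpleGraph.Walk.cons _ _ x x' _ _ q => edgeChi x x' + walkFlow q

@[simp] lemma walkFlow_nil {x : V} : walkFlow (SimpleGraph.Walk.nil : H.Walk x x) = 0 := rfl

@[simp] lemma walkFlow_cons {x x' y : V} (h : H.Adj x x') (q : H.Walk x' y) :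
    walkFlow (SimpleGraph.Walk.cons h q) = edgeChi x x' + walkFlow q := rfl

lemma walkFlow_swap {x y : V} (W : H.Walk x y) (u v : V) :
    walkFlow W (u, v) = - walkFlow W (v, u) := by
  induction W with
  | nil => simp
  | cons h q ih =>
      simp only [walkFlow_cons]
      show edgeChi _ _ (u,v) + walkFlow q (u,v) = -(edgeChi _ _ (v,u) + walkFlow q (v,u))
      rw [ih, edgeChi_swap h.ne]; ring

lemma walkFlow_boundary {x y : V} (W : H.Walk x y) (v : V) :
    ∑ u : V, walkFlow W (u, v) = (if v = y then 1 else 0) - (if v = x then 1 else 0) := by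
  induction W with
  | nil => simp
  | @cons x x' y h q ih =>
      simp only [walkFlow_cons]
      show ∑ u : V, (edgeChi x x' (u, v) + walkFlow q (u, v)) = _
      rw [Finset.sum_add_distrib, ih, edgeChi_boundary h.ne v]
      ring

lemma walkFlow_support {x y : V} (W : H.Walk x y) (u v : V)
    (h : s(u, v) ∉ W.edges) : walkFlow W (u, v) = 0 := by
  induction W with
  | nil => simp
  | @cons x x' y hadj q ih =>
      simp only [SimpleGraph.Walk.edges_cons, List.mem_cons] at h
      push_neg at h
      simp only [walkFlow_cons]
      show edgeChi x x' (u, v) + walkFlow q (u, v) = 0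
      rw [ih h.2]
      have : edgeChi x x' (u, v) = 0 := by
        by_contra hc
        rcases edgeChi_ne_zero hc with h1 | h1 <;>
          simp only [Prod.mk.injEq] at h1 <;> obtain ⟨rfl, rfl⟩ := h1
        · exact h.1 rfl
        · exact h.1 Sym2.eq_swap
      rw [this]; ring


lemma walkFlow_trail_values {x y : V} (W : H.Walk x y) (hW : W.IsTrail) (p : V × V) :
    walkFlow W p = 0 ∨ walkFlow W p = 1 ∨ walkFlow W p = -1 := by
  obtain ⟨u, v⟩ := p
  induction W with
  | nil => simp
  | @cons x x' y hadj q ih =>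
      rw [SimpleGraph.Walk.isTrail_cons] at hW
      simp only [walkFlow_cons]
      show (edgeChi x x' (u, v) + walkFlow q (u, v) = 0) ∨ _ ∨ _
      by_cases hc : edgeChi x x' (u, v) = 0
      · rcases ih hW.1 with h | h | h <;> simp [h, hc]
      · have hs : s(u,v) = s(x,x') := by
          rcases edgeChi_ne_zero hc with h1 | h1 <;>
            simp only [Prod.mk.injEq] at h1 <;> obtain ⟨rfl, rfl⟩ := h1
          · rfl
          · exact Sym2.eq_swap
        have h0 : walkFlow q (u, v) = 0 := walkFlow_support q u v (hs ▸ hW.2)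
        rw [h0, add_zero]
        have hxx : x ≠ x' := hadj.ne
        by_cases e1 : (u,v) = (x,x')
        · simp only [Prod.mk.injEq] at e1; obtain ⟨rfl, rfl⟩ := e1
          simp [edgeChi, h0]
        · by_cases e2 : (u,v) = (x',x)
          · simp only [Prod.mk.injEq] at e2; obtain ⟨rfl, rfl⟩ := e2
            simp [edgeChi, Prod.ext_iff, hxx.symm, h0]
          · exact absurd (by simp [edgeChi, e1, e2]) hc

open Finset in
lemma cut_lemma {M : Type*} [AddCommGroup M] (H : SimpleGraph V) (a b : V)
    (f : V × V → M)
    (hskew : ∀ u v : V, f (u,v) + f (v,u) = 0)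
    (hdiag : ∀ u : V, f (u,u) = 0)
    (hbd : ∀ v : V, ∑ u : V, f (u,v) = 0)
    (hsupp : ∀ u v : V, f (u,v) ≠ 0 → H.Adj u v ∨ (u,v) = (a,b) ∨ (u,v) = (b,a))
    (hnr : ¬ H.Reachable b a) : f (a,b) = 0 := by
  classical
  set S : Finset V := univ.filter (fun v => H.Reachable v a) with hS
  have haS : a ∈ S := by
    simp only [hS, Finset.mem_filter, Finset.mem_univ, true_and]
    exact SimpleGraph.Reachable.refl a
  have hbS : b ∉ S := by simp [hS, hnr]
  have h1 : ∑ v ∈ S, ∑ u : V, f (u, v) = 0 := by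
    exact Finset.sum_eq_zero (fun v _ => hbd v)
  have hsplit : ∀ v : V, ∑ u : V, f (u, v) =
      (∑ u ∈ S, f (u, v)) + ∑ u ∈ univ.filter (fun u => u ∉ S), f (u, v) := by
    intro v
    rw [← Finset.sum_filter_add_sum_filter_not univ (fun u => u ∈ S)]
    congr 1
    apply Finset.sum_congr _ (fun _ _ => rfl)
    simp [Finset.filter_mem_eq_inter]
  rw [Finset.sum_congr rfl (fun v _ => hsplit v), Finset.sum_add_distrib] at h1
  -- the interior part vanishes by skew-symmetry
  have hint : ∑ v ∈ S, ∑ u ∈ S, f (u, v) = 0 := by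
    rw [← Finset.sum_product']
    apply Finset.sum_involution (fun p _ => (p.2, p.1))
    · intro p hp
      exact hskew p.2 p.1
    · intro p hp hne
      intro hcontra
      have : p.1 = p.2 := by
        have := congrArg Prod.fst hcontra
        exact this.symm
      apply hne
      rw [show p = (p.1, p.2) from rfl, this] at hcontra ⊢
      exact hdiag p.2
    · intro p hp
      simp only [Finset.mem_product] at hp ⊢
      exact ⟨hp.2, hp.1⟩
    · intro p hp
      rfl
  rw [hint, zero_add] at h1
  -- the crossing part equals f (b, a)
  have hcross : ∑ v ∈ S, ∑ u ∈ univ.filter (fun u => u ∉ S), f (u, v) = f (b, a) := by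
    rw [← Finset.sum_product']
    apply Finset.sum_eq_single_of_mem (a, b)
    · simp only [Finset.mem_product, Finset.mem_filter, Finset.mem_univ]
      exact ⟨haS, ⟨trivial, hbS⟩⟩
    · rintro ⟨v, u⟩ hp hne
      simp only [Finset.mem_product, Finset.mem_filter, Finset.mem_univ, true_and] at hp
      by_contra hfz
      rcases hsupp u v hfz with hadj | he | he
      · exact hp.2 (Finset.mem_filter.2 ⟨Finset.mem_univ u,
          (hadj.reachable.trans ((Finset.mem_filter.1 hp.1).2))⟩)
      · rw [Prod.mk.injEq] at he
        exact hbS (he.2 ▸ hp.1)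
      · rw [Prod.mk.injEq] at he
        exact hne (by rw [Prod.mk.injEq]; exact ⟨he.2, he.1⟩)
  rw [hcross] at h1
  have := hskew b a
  rw [h1, zero_add] at this
  exact this

lemma exists_circulation (G : SimpleGraph V) {a b : V} (hab : G.Adj a b)
    (R : SimpleGraph V)
    (hR : ∀ u v : V, R.Adj u v → G.Adj u v ∧ ((u,v) ≠ (a,b) ∧ (u,v) ≠ (b,a)))
    (hreach : R.Reachable b a) :
    ∃ z ∈ cycleSpace G, (∀ p : V × V, z p = 0 ∨ z p = 1 ∨ z p = -1) ∧ z (a, b) = 1 ∧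
      (∀ u v : V, z (u, v) ≠ 0 → ((u,v) = (a,b) ∨ (u,v) = (b,a) ∨ R.Adj u v)) := by
  classical
  obtain ⟨W0⟩ := hreach
  set W : R.Walk b a := W0.toPath.1 with hWdef
  have hWtrail : W.IsTrail := W0.toPath.2.isTrail
  set z : EuclideanSpace ℝ (V × V) := edgeChi a b + walkFlow W with hz
  have hzval : ∀ u v : V, z (u, v) = edgeChi a b (u, v) + walkFlow W (u, v) := fun u v => rfl
  have hchiab : s(a, b) ∉ W.edges := by
    intro hmem
    exact (hR a b (W.adj_of_mem_edges hmem)).2.1 rfl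
  have hflow_ab : walkFlow W (a, b) = 0 := walkFlow_support W a b hchiab
  have hflow_ba : walkFlow W (b, a) = 0 :=
    walkFlow_support W b a (by rw [← Sym2.eq_swap]; exact hchiab)
  have hsupp : ∀ u v : V, z (u, v) ≠ 0 → ((u,v) = (a,b) ∨ (u,v) = (b,a) ∨ R.Adj u v) := by
    intro u v hne
    by_cases h1 : (u,v) = (a,b)
    · exact Or.inl h1
    by_cases h2 : (u,v) = (b,a)
    · exact Or.inr (Or.inl h2)
    have hchi : edgeChi a b (u, v) = 0 := by
      by_contra hc
      rcases edgeChi_ne_zero hc with h | h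
      exacts [h1 h, h2 h]
    have : walkFlow W (u, v) ≠ 0 := by
      intro h0
      exact hne (by rw [hzval, hchi, h0, add_zero])
    have hmem : s(u,v) ∈ W.edges := by
      by_contra hc
      exact this (walkFlow_support W u v hc)
    exact Or.inr (Or.inr (W.adj_of_mem_edges hmem))
  refine ⟨z, ?_, ?_, ?_, hsupp⟩
  · rw [mem_cycleSpace_iff]
    refine ⟨fun u v => ?_, fun u v hnadj => ?_, fun v => ?_⟩
    · rw [hzval, hzval, edgeChi_swap hab.ne, walkFlow_swap]; ring
    · by_contra hc
      rcases hsupp u v hc with h | h | h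
      · rw [Prod.mk.injEq] at h; exact hnadj (h.1 ▸ h.2 ▸ hab)
      · rw [Prod.mk.injEq] at h; exact hnadj (h.1 ▸ h.2 ▸ hab.symm)
      · exact hnadj (hR u v h).1
    · have : ∑ u : V, z (u, v) = (∑ u : V, edgeChi a b (u, v)) + ∑ u : V, walkFlow W (u, v) := by
        rw [Finset.sum_congr rfl (fun u _ => hzval u v), Finset.sum_add_distrib]
      rw [this, edgeChi_boundary hab.ne v, walkFlow_boundary W v]
      ring
  · intro p
    obtain ⟨u, v⟩ := p
    by_cases h1 : (u,v) = (a,b)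
    · rw [Prod.mk.injEq] at h1; obtain ⟨rfl, rfl⟩ := h1
      rw [hzval, hflow_ab]
      simp [edgeChi]
    by_cases h2 : (u,v) = (b,a)
    · rw [Prod.mk.injEq] at h2; obtain ⟨rfl, rfl⟩ := h2
      rw [hzval, hflow_ba]
      simp [edgeChi, Prod.ext_iff, hab.ne']
    · have hchi : edgeChi a b (u, v) = 0 := by
        by_contra hc
        rcases edgeChi_ne_zero hc with h | h
        exacts [h1 h, h2 h]
      rw [hzval, hchi, zero_add]
      exact walkFlow_trail_values W hWtrail (u, v)
  · rw [hzval, hflow_ab]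
    simp [edgeChi]

lemma even_natCast_zmod_two {n : ℕ} (h : Even n) : (n : ZMod 2) = 0 := by
  obtain ⟨k, rfl⟩ := h
  push_cast
  ring_nf
  rw [show ((2:ZMod 2)) = 0 from rfl]
  ring

section EvenSets

variable (G : SimpleGraph V)

def IsSymSet (A : Finset (V × V)) : Prop := ∀ u v : V, (u, v) ∈ A → (v, u) ∈ A

def SubAdjSet (A : Finset (V × V)) : Prop := ∀ p ∈ A, G.Adj p.1 p.2

def EvenDegSet (A : Finset (V × V)) : Prop :=
  ∀ v : V, Even ((A.filter (fun p => p.2 = v)).card)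

variable {G}

lemma evenDeg_reachable {A : Finset (V × V)} (hsym : IsSymSet A) (hadj : SubAdjSet G A)
    (heven : EvenDegSet A) {a b : V} (hab : (a, b) ∈ A) :
    (SimpleGraph.fromRel (fun u v => (u,v) ∈ A ∧ (u,v) ≠ (a,b) ∧ (u,v) ≠ (b,a))).Reachable b a := by
  classical
  set R := SimpleGraph.fromRel (fun u v => (u,v) ∈ A ∧ (u,v) ≠ (a,b) ∧ (u,v) ≠ (b,a)) with hR
  by_contra hnr
  have hGab : G.Adj a b := hadj _ hab
  have hf := cut_lemma (M := ZMod 2) R a b (fun p => if p ∈ A then 1 else 0)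
    (fun u v => ?_) (fun u => ?_) (fun v => ?_) (fun u v => ?_) hnr
  · simp only [hab, if_pos] at hf
    exact one_ne_zero hf
  · -- skew
    by_cases h : (u, v) ∈ A
    · have h2 : (v, u) ∈ A := hsym u v h
      simp only [h, h2, if_pos]
      decide
    · have h2 : (v, u) ∉ A := fun hc => h (hsym v u hc)
      simp [h, h2]
  · -- diag
    have : (u, u) ∉ A := fun hc => (G.loopless.irrefl u) (hadj _ hc)
    simp [this]
  · -- boundary parity
    rw [Finset.sum_boole]
    have hcard : (Finset.univ.filter (fun u => (u, v) ∈ A)).card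
        = (A.filter (fun p => p.2 = v)).card := by
      apply Finset.card_nbij' (fun u => (u, v)) (fun p => p.1)
      · intro u hu
        simp only [Finset.mem_coe, Finset.mem_filter, Finset.mem_univ, true_and] at hu
        simp [hu]
      · intro p hp
        simp only [Finset.mem_coe, Finset.mem_filter, Finset.mem_univ, true_and] at hp ⊢
        have : p = (p.1, v) := by
          rw [← hp.2]
        rw [← this]
        exact hp.1
      · intro u hu; rfl
      · intro p hp
        simp only [Finset.mem_coe, Finset.mem_filter] at hp
        rw [← hp.2]
    rw [hcard]
    exact even_natCast_zmod_two (heven v)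
  · -- support
    intro hne
    have hmem : (u, v) ∈ A := by
      by_contra hc; simp [hc] at hne
    by_cases h1 : (u,v) = (a,b)
    · exact Or.inr (Or.inl h1)
    by_cases h2 : (u,v) = (b,a)
    · exact Or.inr (Or.inr h2)
    · left
      rw [hR]
      exact ⟨(hadj _ hmem).ne, Or.inl ⟨hmem, h1, h2⟩⟩

end EvenSets

open Finset in
lemma supp_evenDeg {G : SimpleGraph V} {z : EuclideanSpace ℝ (V × V)} (hz : z ∈ cycleSpace G)
    (hval : ∀ p : V × V, z p = 0 ∨ z p = 1 ∨ z p = -1) :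
    EvenDegSet ((Finset.univ : Finset (V × V)).filter (fun p => z p ≠ 0)) := by
  classical
  intro v
  set P : Finset V := univ.filter (fun u => z (u, v) = 1) with hP
  set N : Finset V := univ.filter (fun u => z (u, v) = -1) with hN
  have hsum0 : ∑ u : V, z (u, v) = 0 := (mem_cycleSpace_iff.1 hz).2.2 v
  have hpt : ∀ u : V, z (u, v) =
      (if z (u, v) = 1 then (1:ℝ) else 0) - (if z (u, v) = -1 then (1:ℝ) else 0) := by
    intro u
    rcases hval (u, v) with h | h | h <;> rw [h] <;> norm_num
  have hsum : (P.card : ℝ) - (N.card : ℝ) = 0 := by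
    rw [← hsum0, Finset.sum_congr rfl (fun u _ => hpt u), Finset.sum_sub_distrib,
      Finset.sum_boole, Finset.sum_boole]
  have hPN : P.card = N.card := by
    have := sub_eq_zero.1 hsum
    exact_mod_cast this
  have hcard : ((univ.filter (fun p : V × V => z p ≠ 0)).filter (fun p => p.2 = v)).card
      = (univ.filter (fun u : V => z (u, v) ≠ 0)).card := by
    apply (Finset.card_nbij' (fun p => p.1) (fun u => (u, v)) ?_ ?_ ?_ ?_)
    · intro p hp
      simp only [Finset.mem_coe, Finset.mem_filter, Finset.mem_univ, true_and] at hp ⊢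
      obtain ⟨h1, h2⟩ := hp
      rw [show ((p.1 : V), v) = p from by rw [← h2]]
      exact h1
    · intro u hu
      simp only [Finset.mem_coe, Finset.mem_filter, Finset.mem_univ, true_and] at hu
      simp [hu]
    · intro p hp
      simp only [Finset.mem_coe, Finset.mem_filter, Finset.mem_univ, true_and] at hp
      rw [← hp.2]
    · intro u hu; rfl
  have hsplit : (univ.filter (fun u : V => z (u, v) ≠ 0)) = P ∪ N := by
    ext u
    simp only [hP, hN, Finset.mem_filter, Finset.mem_univ, true_and, Finset.mem_union]
    constructor
    · intro h
      rcases hval (u, v) with h1 | h1 | h1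
      · exact absurd h1 h
      · exact Or.inl h1
      · exact Or.inr h1
    · rintro (h | h) <;> rw [h] <;> norm_num
  have hdisj : Disjoint P N := by
    rw [Finset.disjoint_left]
    intro u huP huN
    simp only [hP, hN, Finset.mem_filter] at huP huN
    rw [huP.2] at huN
    norm_num at huN
  rw [hcard, hsplit, Finset.card_union_of_disjoint hdisj, ← hPN]
  exact ⟨P.card, by ring⟩

lemma supp_isSym {G : SimpleGraph V} {z : EuclideanSpace ℝ (V × V)} (hz : z ∈ cycleSpace G) :
    IsSymSet ((Finset.univ : Finset (V × V)).filter (fun p => z p ≠ 0)) := by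
  intro u v h
  simp only [Finset.mem_filter, Finset.mem_univ, true_and] at h ⊢
  rw [(mem_cycleSpace_iff.1 hz).1 v u]
  simpa using h

lemma supp_subAdj {G : SimpleGraph V} {z : EuclideanSpace ℝ (V × V)} (hz : z ∈ cycleSpace G) :
    SubAdjSet G ((Finset.univ : Finset (V × V)).filter (fun p => z p ≠ 0)) := by
  intro p hp
  simp only [Finset.mem_filter, Finset.mem_univ, true_and] at hp
  by_contra hc
  exact hp ((mem_cycleSpace_iff.1 hz).2.1 p.1 p.2 hc)

open Finset in
lemma even_rep {G : SimpleGraph V} :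
    ∀ (n : ℕ) (A : Finset (V × V)), A.card ≤ n →
      IsSymSet A → SubAdjSet G A → EvenDegSet A →
      ∃ z ∈ cycleSpace G, (∀ p : V × V, z p = 0 ∨ z p = 1 ∨ z p = -1) ∧
        (∀ p : V × V, z p ≠ 0 ↔ p ∈ A) := by
  classical
  intro n
  induction n with
  | zero =>
      intro A hcard _ _ _
      refine ⟨0, Submodule.zero_mem _, by intro p; left; rfl, ?_⟩
      have : A = ∅ := Finset.card_eq_zero.1 (Nat.le_zero.1 hcard)
      subst this
      intro p
      simp only [Finset.notMem_empty, iff_false]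
      intro hc
      exact hc rfl
  | succ n ih =>
      intro A hcard hsym hadj heven
      rcases Finset.eq_empty_or_nonempty A with rfl | ⟨⟨a, b⟩, hab⟩
      · exact ih ∅ (Nat.zero_le n) hsym hadj heven
      · have hGab : G.Adj a b := hadj _ hab
        have hreach := evenDeg_reachable hsym hadj heven hab
        have hRimp : ∀ u v : V,
            (SimpleGraph.fromRel (fun u v => (u,v) ∈ A ∧ (u,v) ≠ (a,b) ∧ (u,v) ≠ (b,a))).Adj u v →
            G.Adj u v ∧ ((u,v) ≠ (a,b) ∧ (u,v) ≠ (b,a)) := by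
          intro u v hR
          rw [SimpleGraph.fromRel_adj] at hR
          obtain ⟨hne, h | h⟩ := hR
          · exact ⟨hadj _ h.1, h.2⟩
          · refine ⟨(hadj _ h.1).symm, ?_, ?_⟩
            · intro hc
              rw [Prod.mk.injEq] at hc
              exact h.2.2 (by rw [Prod.mk.injEq]; exact ⟨hc.2, hc.1⟩)
            · intro hc
              rw [Prod.mk.injEq] at hc
              exact h.2.1 (by rw [Prod.mk.injEq]; exact ⟨hc.2, hc.1⟩)
        obtain ⟨z₁, hz₁mem, hz₁val, hz₁ab, hz₁supp⟩ :=
          exists_circulation G hGab _ hRimp hreach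
        -- support of z₁ is contained in A
        have hz₁A : ∀ p : V × V, z₁ p ≠ 0 → p ∈ A := by
          rintro ⟨u, v⟩ hne
          rcases hz₁supp u v hne with h | h | h
          · rw [h]; exact hab
          · rw [h]; exact hsym a b hab
          · rw [SimpleGraph.fromRel_adj] at h
            rcases h.2 with h2 | h2
            · exact h2.1
            · exact hsym v u h2.1
        set A₂ : Finset (V × V) := A.filter (fun p => z₁ p = 0) with hA₂
        have hz₁anti := (mem_cycleSpace_iff.1 hz₁mem).1
        have hA₂sym : IsSymSet A₂ := by
          intro u v h
          simp only [hA₂, Finset.mem_filter] at h ⊢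
          refine ⟨hsym u v h.1, ?_⟩
          rw [hz₁anti v u, h.2, neg_zero]
        have hA₂adj : SubAdjSet G A₂ := fun p hp => hadj p (Finset.mem_filter.1 hp).1
        have hA₂even : EvenDegSet A₂ := by
          intro v
          have hsplit := Finset.card_filter_add_card_filter_not
            (s := A.filter (fun p => p.2 = v)) (fun p => z₁ p = 0)
          have h1 : (A.filter (fun p => p.2 = v)).filter (fun p => z₁ p = 0)
              = A₂.filter (fun p => p.2 = v) := by
            rw [hA₂, Finset.filter_filter, Finset.filter_filter]
            apply Finset.filter_congr
            intro p _
            exact and_comm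
          have h2 : (A.filter (fun p => p.2 = v)).filter (fun p => ¬ z₁ p = 0)
              = ((univ.filter (fun p : V × V => z₁ p ≠ 0)).filter (fun p => p.2 = v)) := by
            ext p
            simp only [Finset.mem_filter, Finset.mem_univ, true_and]
            constructor
            · rintro ⟨⟨h3, h4⟩, h5⟩; exact ⟨h5, h4⟩
            · rintro ⟨h3, h4⟩; exact ⟨⟨hz₁A p h3, h4⟩, h3⟩
          rw [h1, h2] at hsplit
          have heven2 := supp_evenDeg hz₁mem hz₁val v
          have heven1 := heven v
          rw [← hsplit] at heven1
          rcases heven1 with ⟨m, hm⟩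
          rcases heven2 with ⟨k, hk⟩
          refine ⟨m - k, ?_⟩
          omega
        have hA₂lt : A₂.card < A.card := by
          apply Finset.card_lt_card
          rw [Finset.ssubset_iff_of_subset (Finset.filter_subset _ _)]
          refine ⟨(a, b), hab, ?_⟩
          simp only [hA₂, Finset.mem_filter, hab, true_and]
          rw [hz₁ab]
          norm_num
        obtain ⟨z₂, hz₂mem, hz₂val, hz₂supp⟩ :=
          ih A₂ (by omega) hA₂sym hA₂adj hA₂even
        refine ⟨z₁ + z₂, Submodule.add_mem _ hz₁mem hz₂mem, ?_, ?_⟩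
        · intro p
          have hdis : z₁ p = 0 ∨ z₂ p = 0 := by
            by_cases h : z₁ p = 0
            · exact Or.inl h
            · right
              by_contra hc
              have := (hz₂supp p).1 hc
              simp only [hA₂, Finset.mem_filter] at this
              exact h this.2
          show z₁ p + z₂ p = 0 ∨ z₁ p + z₂ p = 1 ∨ z₁ p + z₂ p = -1
          rcases hdis with h | h
          · rw [h, zero_add]; exact hz₂val p
          · rw [h, add_zero]; exact hz₁val p
        · intro p
          show z₁ p + z₂ p ≠ 0 ↔ p ∈ A
          constructor
          · intro hne
            by_cases h : z₁ p = 0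
            · rw [h, zero_add] at hne
              exact (Finset.mem_filter.1 ((hz₂supp p).1 hne)).1
            · exact hz₁A p h
          · intro hp
            by_cases h : z₁ p = 0
            · have hp2 : p ∈ A₂ := by
                simp only [hA₂, Finset.mem_filter]; exact ⟨hp, h⟩
              rw [h, zero_add]
              exact (hz₂supp p).2 hp2
            · have hz₂0 : z₂ p = 0 := by
                by_contra hc
                have := (hz₂supp p).1 hc
                simp only [hA₂, Finset.mem_filter] at this
                exact h this.2
              rw [hz₂0, add_zero]
              exact h

open Finset in
lemma even_card_symmDiff {α : Type*} [DecidableEq α] (A B : Finset α)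
    (hA : Even A.card) (hB : Even B.card) : Even (symmDiff A B).card := by
  have h1 : (A \ B).card + (A ∩ B).card = A.card := Finset.card_sdiff_add_card_inter A B
  have h2 : (B \ A).card + (B ∩ A).card = B.card := Finset.card_sdiff_add_card_inter B A
  have h4 : (B ∩ A).card = (A ∩ B).card := by rw [Finset.inter_comm]
  have h3 : (symmDiff A B).card = (A \ B).card + (B \ A).card := by
    rw [symmDiff_def, Finset.sup_eq_union, Finset.card_union_of_disjoint disjoint_sdiff_sdiff]
  obtain ⟨x, hx⟩ := hA
  obtain ⟨y, hy⟩ := hB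
  refine ⟨x + y - (A ∩ B).card, by omega⟩

lemma filter_symmDiff' {α : Type*} [DecidableEq α] (A B : Finset α) (q : α → Prop)
    [DecidablePred q] :
    (symmDiff A B).filter q = symmDiff (A.filter q) (B.filter q) := by
  ext x
  simp only [Finset.mem_filter, Finset.mem_symmDiff]
  tauto

lemma symmDiff_props {G : SimpleGraph V} {A B : Finset (V × V)}
    (hA : IsSymSet A ∧ SubAdjSet G A ∧ EvenDegSet A)
    (hB : IsSymSet B ∧ SubAdjSet G B ∧ EvenDegSet B) :
    IsSymSet (symmDiff A B) ∧ SubAdjSet G (symmDiff A B) ∧ EvenDegSet (symmDiff A B) := by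
  classical
  refine ⟨?_, ?_, ?_⟩
  · intro u v h
    rw [Finset.mem_symmDiff] at h ⊢
    rcases h with ⟨h1, h2⟩ | ⟨h1, h2⟩
    · exact Or.inl ⟨hA.1 u v h1, fun hc => h2 (hB.1 v u hc)⟩
    · exact Or.inr ⟨hB.1 u v h1, fun hc => h2 (hA.1 v u hc)⟩
  · intro p hp
    rw [Finset.mem_symmDiff] at hp
    rcases hp with ⟨h1, _⟩ | ⟨h1, _⟩
    exacts [hA.2.1 p h1, hB.2.1 p h1]
  · intro v
    rw [filter_symmDiff']
    exact even_card_symmDiff _ _ (hA.2.2 v) (hB.2.2 v)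

open Finset in
lemma exists_even_through {G : SimpleGraph V} {a b : V} (hab : G.Adj a b)
    (hnz : projEdge G a b ≠ 0) :
    ∃ A : Finset (V × V), (IsSymSet A ∧ SubAdjSet G A ∧ EvenDegSet A) ∧ (a, b) ∈ A := by
  classical
  set w : EuclideanSpace ℝ (V × V) := projEdge G a b with hw
  have hwmem : w ∈ cycleSpace G := projEdge_mem G a b
  have hwprops := mem_cycleSpace_iff.1 hwmem
  have hwab : w (a, b) ≠ 0 := by
    intro hc
    have h := norm_sq_projEdge hab
    rw [← hw, hc, mul_zero, sq_eq_zero_iff, norm_eq_zero] at h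
    exact hnz h
  set R := SimpleGraph.fromRel
    (fun u v => G.Adj u v ∧ (u,v) ≠ (a,b) ∧ (u,v) ≠ (b,a)) with hR
  have hreach : R.Reachable b a := by
    by_contra hnr
    refine hwab (cut_lemma R a b (fun p => w p) ?_ ?_ ?_ ?_ hnr)
    · intro u v
      show w (u, v) + w (v, u) = 0
      rw [hwprops.1 u v]
      ring
    · intro u
      show w (u, u) = 0
      have := hwprops.1 u u
      linarith
    · intro v
      exact hwprops.2.2 v
    · intro u v hne
      have hadj : G.Adj u v := by
        by_contra hc
        exact hne (hwprops.2.1 u v hc)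
      by_cases h1 : (u,v) = (a,b)
      · exact Or.inr (Or.inl h1)
      by_cases h2 : (u,v) = (b,a)
      · exact Or.inr (Or.inr h2)
      · exact Or.inl ⟨hadj.ne, Or.inl ⟨hadj, h1, h2⟩⟩
  have hRimp : ∀ u v : V, R.Adj u v → G.Adj u v ∧ ((u,v) ≠ (a,b) ∧ (u,v) ≠ (b,a)) := by
    intro u v hr
    rw [hR, SimpleGraph.fromRel_adj] at hr
    obtain ⟨hne, h | h⟩ := hr
    · exact ⟨h.1, h.2⟩
    · refine ⟨h.1.symm, ?_, ?_⟩
      · intro hc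
        rw [Prod.mk.injEq] at hc
        exact h.2.2 (by rw [Prod.mk.injEq]; exact ⟨hc.2, hc.1⟩)
      · intro hc
        rw [Prod.mk.injEq] at hc
        exact h.2.1 (by rw [Prod.mk.injEq]; exact ⟨hc.2, hc.1⟩)
  obtain ⟨z, hzmem, hzval, hzab, _⟩ := exists_circulation G hab R hRimp hreach
  refine ⟨(Finset.univ : Finset (V × V)).filter (fun p => z p ≠ 0),
    ⟨supp_isSym hzmem, supp_subAdj hzmem, supp_evenDeg hzmem hzval⟩, ?_⟩
  simp only [Finset.mem_filter, Finset.mem_univ, true_and]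
  rw [hzab]
  norm_num

open Finset in
lemma exists_uniform_family (G : SimpleGraph V)
    (hnz : ∀ a b : V, G.Adj a b → projEdge G a b ≠ 0)
    (hne : ∃ a b : V, G.Adj a b) :
    ∃ (𝔉 : Finset (Finset (V × V))) (F : Finset (V × V) → EuclideanSpace ℝ (V × V)) (N : ℕ),
      0 < N ∧ (∀ A ∈ 𝔉, F A ∈ cycleSpace G) ∧
      (∀ a b : V, G.Adj a b → ∑ A ∈ 𝔉, (F A (a, b))^2 = (N : ℝ)) := by
  classical
  set P : Finset (V × V) → Prop :=
    fun A => IsSymSet A ∧ SubAdjSet G A ∧ EvenDegSet A with hP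
  set 𝔈 : Finset (Finset (V × V)) := Finset.univ.filter P with h𝔈
  have hmem𝔈 : ∀ A, A ∈ 𝔈 ↔ P A := by
    intro A
    simp [h𝔈]
  set F : Finset (V × V) → EuclideanSpace ℝ (V × V) := fun A =>
    if h : P A then (even_rep A.card A le_rfl h.1 h.2.1 h.2.2).choose else 0 with hF
  have hFspec : ∀ A, P A → (F A ∈ cycleSpace G ∧
      (∀ p : V × V, F A p = 0 ∨ F A p = 1 ∨ F A p = -1) ∧
      (∀ p : V × V, F A p ≠ 0 ↔ p ∈ A)) := by
    intro A h
    have hspec := (even_rep A.card A le_rfl h.1 h.2.1 h.2.2).choose_spec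
    rw [hF]
    simp only [dif_pos h]
    exact ⟨hspec.1, hspec.2.1, hspec.2.2⟩
  -- the square of F A at p is the indicator of p ∈ A
  have hsq : ∀ A, P A → ∀ p : V × V, (F A p)^2 = if p ∈ A then (1:ℝ) else 0 := by
    intro A h p
    obtain ⟨_, hval, hiff⟩ := hFspec A h
    by_cases hp : p ∈ A
    · rcases hval p with h0 | h1 | h1
      · exact absurd hp (by rw [← hiff p]; exact fun hc => hc h0)
        -- p ∈ A but F A p = 0 contradicts iff
      · rw [h1, if_pos hp]; norm_num
      · rw [h1, if_pos hp]; norm_num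
    · have : F A p = 0 := by
        by_contra hc
        exact hp ((hiff p).1 hc)
      rw [this, if_neg hp]
      ring
  -- counting: for each adjacent pair, exactly half the members of 𝔈 contain it
  have hcount : ∀ a b : V, G.Adj a b →
      2 * (𝔈.filter (fun A => (a, b) ∈ A)).card = 𝔈.card := by
    intro a b hab
    obtain ⟨A₀, hA₀P, hA₀mem⟩ := exists_even_through hab (hnz a b hab)
    have hbij : (𝔈.filter (fun A => (a, b) ∈ A)).card
        = (𝔈.filter (fun A => (a, b) ∉ A)).card := by
      apply Finset.card_nbij' (fun A => symmDiff A A₀) (fun A => symmDiff A A₀)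
      · intro A hA
        simp only [Finset.mem_coe, Finset.mem_filter, hmem𝔈] at hA ⊢
        refine ⟨symmDiff_props hA.1 hA₀P, ?_⟩
        rw [Finset.mem_symmDiff]
        rintro (⟨_, h2⟩ | ⟨_, h2⟩)
        exacts [h2 hA₀mem, h2 hA.2]
      · intro A hA
        simp only [Finset.mem_coe, Finset.mem_filter, hmem𝔈] at hA ⊢
        refine ⟨symmDiff_props hA.1 hA₀P, ?_⟩
        rw [Finset.mem_symmDiff]
        exact Or.inr ⟨hA₀mem, hA.2⟩
      · intro A _
        exact symmDiff_symmDiff_cancel_right A₀ A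
      · intro A _
        exact symmDiff_symmDiff_cancel_right A₀ A
    have hsplit := Finset.card_filter_add_card_filter_not
      (s := 𝔈) (fun A => (a, b) ∈ A)
    omega
  obtain ⟨a₀, b₀, hab₀⟩ := hne
  set N : ℕ := (𝔈.filter (fun A => (a₀, b₀) ∈ A)).card with hN
  have hNpos : 0 < N := by
    obtain ⟨A₀, hA₀P, hA₀mem⟩ := exists_even_through hab₀ (hnz a₀ b₀ hab₀)
    apply Finset.card_pos.2
    exact ⟨A₀, Finset.mem_filter.2 ⟨(hmem𝔈 A₀).2 hA₀P, hA₀mem⟩⟩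
  refine ⟨𝔈, F, N, hNpos, ?_, ?_⟩
  · intro A hA
    exact (hFspec A ((hmem𝔈 A).1 hA)).1
  · intro a b hab
    have hsum : ∑ A ∈ 𝔈, (F A (a, b))^2 = ((𝔈.filter (fun A => (a, b) ∈ A)).card : ℝ) := by
      rw [Finset.sum_congr rfl (fun A hA => hsq A ((hmem𝔈 A).1 hA) (a, b)),
        Finset.sum_boole]
    rw [hsum]
    have h1 := hcount a b hab
    have h2 := hcount a₀ b₀ hab₀
    rw [← hN] at h2
    have : (𝔈.filter (fun A => (a, b) ∈ A)).card = N := by omega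
    rw [this]

lemma euclid_inner (f g : EuclideanSpace ℝ (V × V)) :
    ⟪f, g⟫ = ∑ p : V × V, f p * g p := by
  rw [PiLp.inner_apply]
  simp
  exact Finset.sum_congr rfl (fun _ _ => mul_comm _ _)

open Finset in
lemma norm_sq_eq_sum_adj {G : SimpleGraph V} [DecidableRel G.Adj]
    {w : EuclideanSpace ℝ (V × V)} (hw : w ∈ cycleSpace G) :
    ‖w‖^2 = ∑ p ∈ Finset.univ.filter (fun p : V × V => G.Adj p.1 p.2), (w p)^2 := by
  rw [← real_inner_self_eq_norm_sq, euclid_inner]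
  rw [← Finset.sum_subset (Finset.filter_subset (fun p : V × V => G.Adj p.1 p.2) Finset.univ)]
  · exact Finset.sum_congr rfl (fun p _ => (sq (w p)).symm)
  · intro p _ hp
    simp only [Finset.mem_filter, Finset.mem_univ, true_and] at hp
    rw [(mem_cycleSpace_iff.1 hw).2.1 p.1 p.2 hp]
    ring

open Finset in
lemma sum_norm_sq_projEdge {G : SimpleGraph V} [DecidableRel G.Adj] :
    ∑ p ∈ Finset.univ.filter (fun p : V × V => G.Adj p.1 p.2), ‖projEdge G p.1 p.2‖^2
      = 4 * (Module.finrank ℝ (cycleSpace G) : ℝ) := by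
  classical
  set T := Finset.univ.filter (fun p : V × V => G.Adj p.1 p.2) with hT
  set b := stdOrthonormalBasis ℝ (cycleSpace G) with hb
  have hstep : ∀ p ∈ T, ‖projEdge G p.1 p.2‖^2
      = ∑ i, 4 * ((b i : EuclideanSpace ℝ (V × V)) p)^2 := by
    rintro ⟨a', b'⟩ hp
    simp only [hT, Finset.mem_filter, Finset.mem_univ, true_and] at hp
    have hx : ‖projEdge G a' b'‖^2
        = ⟪(Submodule.orthogonalProjection (cycleSpace G) (edgeChi a' b') : cycleSpace G),
           (Submodule.orthogonalProjection (cycleSpace G) (edgeChi a' b') : cycleSpace G)⟫ := by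
      rw [real_inner_self_eq_norm_sq]
      rfl
    rw [hx, ← OrthonormalBasis.sum_inner_mul_inner b]
    apply Finset.sum_congr rfl
    intro i _
    have hcoe : ∀ y : cycleSpace G,
        (inner ℝ (Submodule.orthogonalProjection (cycleSpace G) (edgeChi a' b')) y : ℝ)
          = ⟪projEdge G a' b', (y : EuclideanSpace ℝ (V × V))⟫ := fun y => rfl
    rw [real_inner_comm ((Submodule.orthogonalProjection (cycleSpace G) (edgeChi a' b'))) (b i), hcoe,
      inner_projEdge_of_mem hp (b i).2]
    ring
  rw [Finset.sum_congr rfl hstep, Finset.sum_comm]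
  have hlast : ∀ i, ∑ p ∈ T, 4 * ((b i : EuclideanSpace ℝ (V × V)) p)^2 = 4 := by
    intro i
    rw [← Finset.mul_sum, ← norm_sq_eq_sum_adj (b i).2]
    have : ‖(b i : EuclideanSpace ℝ (V × V))‖ = 1 := by
      rw [← Submodule.coe_norm]
      exact b.orthonormal.1 i
    rw [this]
    norm_num
  rw [Finset.sum_congr rfl (fun i _ => hlast i)]
  simp [Finset.card_univ, mul_comm]

open Finset in
lemma card_adj_filter (G : SimpleGraph V) [DecidableRel G.Adj] :
    (Finset.univ.filter (fun p : V × V => G.Adj p.1 p.2)).card = 2 * G.edgeFinset.card := by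
  rw [← SimpleGraph.sum_degrees_eq_twice_card_edges]
  rw [Finset.card_eq_sum_card_fiberwise
    (f := Prod.fst) (t := Finset.univ) (fun p _ => Finset.mem_univ p.1)]
  apply Finset.sum_congr rfl
  intro a _
  apply Finset.card_nbij' (fun p => p.2) (fun v => (a, v))
  · intro p hp
    simp only [Finset.mem_coe, Finset.mem_filter, Finset.mem_univ, true_and] at hp
    rw [Finset.mem_coe, SimpleGraph.mem_neighborFinset]
    rw [← hp.2]
    exact hp.1
  · intro v hv
    rw [Finset.mem_coe, SimpleGraph.mem_neighborFinset] at hv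
    simp [hv]
  · intro p hp
    simp only [Finset.mem_coe, Finset.mem_filter] at hp
    rw [← hp.2]
  · intro v _
    rfl

theorem design_moment_imp_equal_norms'
    (G : SimpleGraph V) [DecidableRel G.Adj]
    (hconn : G.Connected) (hne : ∃ a b : V, G.Adj a b)
    (hnz : ∀ a b : V, G.Adj a b → projEdge G a b ≠ 0)
    (h n : ℕ) (hh : h = Module.finrank ℝ (cycleSpace G))
    (hn : n = 2 * G.edgeFinset.card)
    (hmom : ∀ w ∈ cycleSpace G,
      ∑ p ∈ Finset.univ.filter (fun p : V × V => G.Adj p.1 p.2),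
        (⟪‖projEdge G p.1 p.2‖⁻¹ • projEdge G p.1 p.2, w⟫) ^ 2
          = ((n : ℝ) / (h : ℝ)) * ‖w‖ ^ 2) :
    ∀ a b c d : V, G.Adj a b → G.Adj c d →
      ‖projEdge G a b‖ = ‖projEdge G c d‖ := by
  classical
  intro a b c d hab hcd
  set T : Finset (V × V) := Finset.univ.filter (fun p : V × V => G.Adj p.1 p.2) with hT
  have hmemT : ∀ p : V × V, p ∈ T ↔ G.Adj p.1 p.2 := by
    intro p; simp [hT]
  set s : V × V → ℝ := fun p => ‖projEdge G p.1 p.2‖^2 with hs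
  set u : V × V → ℝ := fun p => (‖projEdge G p.1 p.2‖^2)⁻¹ with hu
  have hspos : ∀ p ∈ T, 0 < s p := by
    intro p hp
    exact pow_pos (norm_pos_iff.2 (hnz p.1 p.2 ((hmemT p).1 hp))) 2
  have hupos : ∀ p ∈ T, 0 < u p := fun p hp => inv_pos.2 (hspos p hp)
  have hsu : ∀ p ∈ T, s p * u p = 1 := fun p hp => mul_inv_cancel₀ (ne_of_gt (hspos p hp))
  have hh0 : 0 < h := by
    rw [hh]
    have : Nontrivial (cycleSpace G) := by
      obtain ⟨a', b', hab'⟩ := hne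
      refine ⟨⟨projEdge G a' b', projEdge_mem G a' b'⟩, 0, ?_⟩
      intro hc
      exact hnz a' b' hab' (by simpa using congrArg Subtype.val hc)
    exact Module.finrank_pos
  have hhR : (h:ℝ) ≠ 0 := by positivity
  have hcardT : T.card = n := by
    rw [hT, card_adj_filter, hn]
  have hmom' : ∀ w ∈ cycleSpace G,
      ∑ p ∈ T, 4 * u p * (w p)^2 = ((n:ℝ)/h) * ∑ p ∈ T, (w p)^2 := by
    intro w hw
    have h0 := hmom w hw
    rw [norm_sq_eq_sum_adj hw] at h0
    rw [← h0]
    apply Finset.sum_congr rfl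
    rintro ⟨p1, p2⟩ hp
    have hadjp : G.Adj p1 p2 := (hmemT (p1, p2)).1 hp
    rw [real_inner_smul_left, inner_projEdge_of_mem hadjp hw]
    have hinv : u (p1, p2) = ‖projEdge G p1 p2‖⁻¹ ^ 2 := by
      simp only [hu]
      rw [inv_pow]
    rw [mul_pow, hinv]
    ring
  obtain ⟨𝔉, F, N, hN, hFmem, hFsum⟩ := exists_uniform_family G hnz hne
  have hNR : (N:ℝ) ≠ 0 := by positivity
  have hsumu : ∑ p ∈ T, u p = (n:ℝ)^2 / (4*h) := by
    have htot : ∑ A ∈ 𝔉, (∑ p ∈ T, 4 * u p * (F A p)^2)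
        = ∑ A ∈ 𝔉, ((n:ℝ)/h) * ∑ p ∈ T, (F A p)^2 := by
      apply Finset.sum_congr rfl
      intro A hA
      exact hmom' (F A) (hFmem A hA)
    rw [Finset.sum_comm] at htot
    have hleft : ∀ p ∈ T, ∑ A ∈ 𝔉, 4 * u p * (F A p)^2 = 4 * u p * N := by
      intro p hp
      rw [← Finset.mul_sum]
      have hkey := hFsum p.1 p.2 ((hmemT p).1 hp)
      rw [show ((p.1 : V), (p.2 : V)) = p from rfl] at hkey
      rw [hkey]
    have hright : ∑ A ∈ 𝔉, ((n:ℝ)/h) * ∑ p ∈ T, (F A p)^2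
        = ((n:ℝ)/h) * ((N:ℝ) * n) := by
      rw [← Finset.mul_sum]
      congr 1
      rw [Finset.sum_comm]
      have hthis : ∀ p ∈ T, ∑ A ∈ 𝔉, (F A p)^2 = (N:ℝ) := by
        intro p hp
        have hkey := hFsum p.1 p.2 ((hmemT p).1 hp)
        rw [show ((p.1 : V), (p.2 : V)) = p from rfl] at hkey
        exact hkey
      rw [Finset.sum_congr rfl hthis, Finset.sum_const, hcardT]
      rw [nsmul_eq_mul]
      ring
    rw [Finset.sum_congr rfl hleft, hright] at htot
    have hfactor : ∑ p ∈ T, 4 * u p * (N:ℝ) = (4 * N) * ∑ p ∈ T, u p := by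
      rw [Finset.mul_sum]
      apply Finset.sum_congr rfl
      intro p _
      ring
    rw [hfactor] at htot
    have key : (N:ℝ) * (4 * (∑ p ∈ T, u p) * h) = (N:ℝ) * ((n:ℝ) * n) := by
      have hdiv : ((n:ℝ)/h) * ((N:ℝ) * n) * h = (n:ℝ) * ((N:ℝ) * n) := by
        field_simp
      calc (N:ℝ) * (4 * (∑ p ∈ T, u p) * h)
          = ((4 * N) * ∑ p ∈ T, u p) * h := by ring
        _ = (((n:ℝ)/h) * ((N:ℝ) * n)) * h := by rw [htot]
        _ = (n:ℝ) * ((N:ℝ) * n) := hdiv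
        _ = (N:ℝ) * ((n:ℝ) * n) := by ring
    have key2 := mul_left_cancel₀ hNR key
    rw [eq_div_iff (by positivity : (4:ℝ)*(h:ℝ) ≠ 0)]
    linear_combination key2
  have hsums : ∑ p ∈ T, s p = 4 * (h:ℝ) := by
    have := sum_norm_sq_projEdge (G := G)
    rw [← hT, ← hh] at this
    exact this
  have hdouble : ∑ p ∈ T, ∑ q ∈ T, (s p - s q)^2 * (u p * u q) = 0 := by
    have hexp : ∀ p ∈ T, ∀ q ∈ T,
        (s p - s q)^2 * (u p * u q) = s p * u q + s q * u p - 2 := by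
      intro p hp q hq
      have h1 : s p ≠ 0 := ne_of_gt (hspos p hp)
      have h2 : s q ≠ 0 := ne_of_gt (hspos q hq)
      have hup : u p = (s p)⁻¹ := rfl
      have huq : u q = (s q)⁻¹ := rfl
      rw [hup, huq]
      field_simp
      ring
    have hinner : ∀ p ∈ T, ∑ q ∈ T, (s p - s q)^2 * (u p * u q)
        = s p * (∑ q ∈ T, u q) + (∑ q ∈ T, s q) * u p - 2 * T.card := by
      intro p hp
      rw [Finset.sum_congr rfl (fun q hq => hexp p hp q hq),
        Finset.sum_sub_distrib, Finset.sum_add_distrib, ← Finset.mul_sum,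
        ← Finset.sum_mul, Finset.sum_const, nsmul_eq_mul]
      ring
    rw [Finset.sum_congr rfl hinner, Finset.sum_sub_distrib, Finset.sum_add_distrib,
      ← Finset.sum_mul, ← Finset.mul_sum, Finset.sum_const, nsmul_eq_mul,
      hsums, hsumu, hcardT]
    field_simp
    ring
  have hp0 : (a, b) ∈ T := (hmemT (a, b)).2 hab
  have hq0 : (c, d) ∈ T := (hmemT (c, d)).2 hcd
  have hnonneg : ∀ p ∈ T, 0 ≤ ∑ q ∈ T, (s p - s q)^2 * (u p * u q) := by
    intro p hp
    apply Finset.sum_nonneg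
    intro q hq
    have := hupos p hp
    have := hupos q hq
    positivity
  have hrow := (Finset.sum_eq_zero_iff_of_nonneg hnonneg).1 hdouble (a, b) hp0
  have hnonneg2 : ∀ q ∈ T, 0 ≤ (s (a,b) - s q)^2 * (u (a,b) * u q) := by
    intro q hq
    have := hupos (a,b) hp0
    have := hupos q hq
    positivity
  have hterm := (Finset.sum_eq_zero_iff_of_nonneg hnonneg2).1 hrow (c, d) hq0
  have hsq : (s (a,b) - s (c,d))^2 = 0 := by
    have hpos : 0 < u (a,b) * u (c,d) := mul_pos (hupos _ hp0) (hupos _ hq0)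
    by_contra hc
    have h1 : 0 < (s (a,b) - s (c,d))^2 := lt_of_le_of_ne (sq_nonneg _) (Ne.symm hc)
    nlinarith [hterm]
  have hseq : s (a,b) = s (c,d) := by
    have := pow_eq_zero_iff (n := 2) (by norm_num) |>.1 hsq
    linarith [sub_eq_zero.1 this]
  have : ‖projEdge G a b‖^2 = ‖projEdge G c d‖^2 := hseq
  have hfin := congrArg Real.sqrt this
  rwa [Real.sqrt_sq (norm_nonneg _), Real.sqrt_sq (norm_nonneg _)] at hfin


/-- **Lemma 1.2, converse direction.** If the normalized projected edge vectors of a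
connected graph satisfy the second-moment condition of a spherical 2-design, then all
the norms `‖P χ_(a,b)‖` are equal. -/
theorem design_moment_imp_equal_norms
    {V : Type*} [Fintype V] [DecidableEq V] (G : SimpleGraph V) [DecidableRel G.Adj]
    (hconn : G.Connected) (hne : ∃ a b : V, G.Adj a b)
    (hnz : ∀ a b : V, G.Adj a b → projEdge G a b ≠ 0)
    (h n : ℕ) (hh : h = Module.finrank ℝ (cycleSpace G))
    (hn : n = 2 * G.edgeFinset.card)
    (hmom : ∀ w ∈ cycleSpace G,
      ∑ p ∈ Finset.univ.filter (fun p : V × V => G.Adj p.1 p.2),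
        (⟪‖projEdge G p.1 p.2‖⁻¹ • projEdge G p.1 p.2, w⟫) ^ 2
          = ((n : ℝ) / (h : ℝ)) * ‖w‖ ^ 2) :
    ∀ a b c d : V, G.Adj a b → G.Adj c d →
      ‖projEdge G a b‖ = ‖projEdge G c d‖ :=
  design_moment_imp_equal_norms' G hconn hne hnz h n hh hn hmom

end
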